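/- Every reduction sequence from a statement in the clocked fragment terminates: the reduction relation → is well-founded (strongly normalizing). Consequently (together with local confluence) every statement has a unique normal form. -/
import Mathlib


/-- Statements of the clocked X10 fragment (loops omitted/unrolled);
`Basic` also plays the role of skip. -/
inductive Stmt : Type
  | Basic : Stmt
  | Advance : Stmt
  | Seq : Stmt → Stmt → Stmt
  | Async : Stmt → Stmt
  | Finish : Stmt → Stmt

/-- A statement is asynchronous. -/
inductive isAsync : Stmt → Prop
  | async (s : Stmt) : isAsync (Stmt.Async s)
  | seq {s t : Stmt} : isAsync s → isAsync t → isAsync (Stmt.Seq s t)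

/-- A statement is synchronous. -/
inductive isSync : Stmt → Prop
  | basic : isSync Stmt.Basic
  | advance : isSync Stmt.Advance
  | finish (s : Stmt) : isSync (Stmt.Finish s)
  | seqL {s : Stmt} (t : Stmt) : isSync s → isSync (Stmt.Seq s t)
  | seqR (s : Stmt) {t : Stmt} : isSync t → isSync (Stmt.Seq s t)

/-- A statement is stuck: every activated sub-statement is an advance. -/
inductive stuck : Stmt → Prop
  | advance : stuck Stmt.Advance
  | async {s : Stmt} : stuck s → stuck (Stmt.Async s)
  | seqSync {s : Stmt} (t : Stmt) : isSync s → stuck s → stuck (Stmt.Seq s t)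
  | seqAsync {s t : Stmt} : isAsync s → stuck s → stuck t → stuck (Stmt.Seq s t)

/-- Clock step relation: `s ⟹ t`, replacing the initial advances by skips. -/
inductive Derives : Stmt → Stmt → Prop
  | advance : Derives Stmt.Advance Stmt.Basic
  | basic : Derives Stmt.Basic Stmt.Basic
  | async {s t : Stmt} : Derives s t → Derives (Stmt.Async s) (Stmt.Async t)
  | seqSync {s t : Stmt} (u : Stmt) : isSync s → Derives s t →
      Derives (Stmt.Seq s u) (Stmt.Seq t u)
  | seqAsync {s s' t t' : Stmt} : isAsync s → Derives s s' → Derives t t' →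
      Derives (Stmt.Seq s t) (Stmt.Seq s' t')

mutual
/-- Heap-free reduction to a statement, including the clock rule. -/
inductive Step : Stmt → Stmt → Prop
  | async {s s' : Stmt} : Step s s' → Step (Stmt.Async s) (Stmt.Async s')
  | finish {s s' : Stmt} : Step s s' → Step (Stmt.Finish s) (Stmt.Finish s')
  | seqL {s s' : Stmt} (t : Stmt) : Step s s' → Step (Stmt.Seq s t) (Stmt.Seq s' t)
  | seqLDone {s : Stmt} (t : Stmt) : StepDone s → Step (Stmt.Seq s t) t
  | seqR {s t t' : Stmt} : isAsync s → Step t t' → Step (Stmt.Seq s t) (Stmt.Seq s t')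
  | seqRDone {s t : Stmt} : isAsync s → StepDone t → Step (Stmt.Seq s t) s
  | clock {s t : Stmt} : stuck s → Derives s t → Step (Stmt.Finish s) (Stmt.Finish t)

/-- Heap-free reduction to a terminated configuration. -/
inductive StepDone : Stmt → Prop
  | basic : StepDone Stmt.Basic
  | async {s : Stmt} : StepDone s → StepDone (Stmt.Async s)
  | finish {s : Stmt} : StepDone s → StepDone (Stmt.Finish s)
end

/-- Configurations: a statement still to execute, or `none` for termination. -/
inductive StepC : Option Stmt → Option Stmt → Prop
  | step {s t : Stmt} : Step s t → StepC (some s) (some t)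
  | done {s : Stmt} : StepDone s → StepC (some s) none

/-! ### Auxiliary development -/

/-- number of advance occurrences -/
def adv : Stmt → ℕ
  | .Basic => 0
  | .Advance => 1
  | .Seq s t => adv s + adv t
  | .Async s => adv s
  | .Finish s => adv s

/-- number of basic occurrences -/
def bas : Stmt → ℕ
  | .Basic => 1
  | .Advance => 0
  | .Seq s t => bas s + bas t
  | .Async s => bas s
  | .Finish s => bas s

/-- the termination measure -/
def mu (s : Stmt) : ℕ := 2 * adv s + bas s

lemma not_sync_async {s : Stmt} (ha : isAsync s) (hs : isSync s) : False := by
  induction ha with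
  | async s => cases hs
  | seq h1 h2 ih1 ih2 => cases hs with
    | seqL t h => exact ih1 h
    | seqR s h => exact ih2 h

lemma derives_preserve {s t : Stmt} (h : Derives s t) :
    adv t + bas t = adv s + bas s := by
  induction h with
  | advance => simp [adv, bas]
  | basic => rfl
  | async h ih => simpa [adv, bas] using ih
  | seqSync u hs h ih => simp [adv, bas]; omega
  | seqAsync ha h1 h2 ih1 ih2 => simp [adv, bas]; omega

lemma stuck_derives_lt {s t : Stmt} (hst : stuck s) (h : Derives s t) :
    adv t < adv s := by
  induction h with
  | advance => simp [adv]
  | basic => cases hst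
  | async h ih =>
      cases hst with
      | async hs => simpa [adv] using ih hs
  | seqSync u hs h ih =>
      cases hst with
      | seqSync t hsy hstk => have := ih hstk; simp [adv]; omega
      | seqAsync ha _ _ => exact absurd hs (fun hs => not_sync_async ha hs)
  | seqAsync ha h1 h2 ih1 ih2 =>
      cases hst with
      | seqSync t hsy hstk => exact absurd hsy (fun hs => not_sync_async ha hs)
      | seqAsync _ hs1 hs2 =>
          have := ih1 hs1; have := ih2 hs2; simp [adv]; omega

lemma done_bas_pos : ∀ {s : Stmt}, StepDone s → 0 < bas s := by
  intro s
  induction s with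
  | Basic => intro _; simp [bas]
  | Advance => intro h; cases h
  | Seq s t ihs iht => intro h; cases h
  | Async s ih => intro h; cases h with | async h => simpa [bas] using ih h
  | Finish s ih => intro h; cases h with | finish h => simpa [bas] using ih h

lemma step_mu : ∀ {s t : Stmt}, Step s t → mu t < mu s := by
  intro s
  induction s with
  | Basic => intro t h; cases h
  | Advance => intro t h; cases h
  | Async s ih =>
      intro t h
      cases h with
      | async h => have := ih h; simp [mu, adv, bas] at *; omega
  | Finish s ih =>
      intro t h
      cases h with
      | finish h => have := ih h; simp [mu, adv, bas] at *; omega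
      | clock hst hd =>
          have h1 := stuck_derives_lt hst hd
          have h2 := derives_preserve hd
          simp [mu, adv, bas]; omega
  | Seq s t ihs iht =>
      intro u h
      cases h with
      | seqL t h => have := ihs h; simp [mu, adv, bas] at *; omega
      | seqLDone t h => have := done_bas_pos h; simp [mu, adv, bas]; omega
      | seqR ha h => have := iht h; simp [mu, adv, bas] at *; omega
      | seqRDone ha h => have := done_bas_pos h; simp [mu, adv, bas]; omega

/-- measure on configurations -/
def nu : Option Stmt → ℕ
  | none => 0
  | some s => mu s + 1

lemma stepC_nu {a b : Option Stmt} (h : StepC a b) : nu b < nu a := by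
  cases h with
  | step h => have := step_mu h; simp [nu]; omega
  | done h => simp [nu]

lemma wf_stepC : WellFounded (fun a b : Option Stmt => StepC b a) :=
  Subrelation.wf (fun h => stepC_nu h) (InvImage.wf nu Nat.lt_wfRel.wf)

lemma stuck_not_done {s : Stmt} (h : stuck s) (hd : StepDone s) : False := by
  induction h with
  | advance => cases hd
  | async h ih => cases hd with | async hd => exact ih hd
  | seqSync t hs h ih => cases hd
  | seqAsync ha h1 h2 ih1 ih2 => cases hd

lemma stuck_no_step {s : Stmt} (h : stuck s) : ∀ {t}, Step s t → False := by
  induction h with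
  | advance => intro t h; cases h
  | async h ih => intro t hst; cases hst with | async h' => exact ih h'
  | seqSync t hs h ih =>
      intro u hst
      cases hst with
      | seqL t h' => exact ih h'
      | seqLDone t h' => exact stuck_not_done h h'
      | seqR ha h' => exact not_sync_async ha hs
      | seqRDone ha h' => exact not_sync_async ha hs
  | seqAsync ha h1 h2 ih1 ih2 =>
      intro u hst
      cases hst with
      | seqL t h' => exact ih1 h'
      | seqLDone t h' => exact stuck_not_done h1 h'
      | seqR _ h' => exact ih2 h'
      | seqRDone _ h' => exact stuck_not_done h2 h'

lemma done_no_step : ∀ {s : Stmt}, StepDone s → ∀ {t}, Step s t → False := by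
  intro s
  induction s with
  | Basic => intro _ t h; cases h
  | Advance => intro h; cases h
  | Seq s t ihs iht => intro h; cases h
  | Async s ih =>
      intro h t hst
      cases h with | async h =>
      cases hst with | async h' => exact ih h h'
  | Finish s ih =>
      intro h t hst
      cases h with | finish h =>
      cases hst with
      | finish h' => exact ih h h'
      | clock hs hd => exact stuck_not_done hs h

lemma isAsync_step {s : Stmt} (ha : isAsync s) : ∀ {t}, Step s t → isAsync t := by
  induction ha with
  | async s => intro t h; cases h with | async h => exact isAsync.async _
  | seq h1 h2 ih1 ih2 =>
      intro u h
      cases h with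
      | seqL t h' => exact isAsync.seq (ih1 h') h2
      | seqLDone t h' => exact h2
      | seqR _ h' => exact isAsync.seq h1 (ih2 h')
      | seqRDone _ h' => exact h1

lemma derives_det {s t₁ : Stmt} (h1 : Derives s t₁) :
    ∀ {t₂}, Derives s t₂ → t₁ = t₂ := by
  induction h1 with
  | advance => intro t₂ h2; cases h2; rfl
  | basic => intro t₂ h2; cases h2; rfl
  | async h ih => intro t₂ h2; cases h2 with | async h' => rw [ih h']
  | seqSync u hs h ih =>
      intro t₂ h2
      cases h2 with
      | seqSync _ hs' h' => rw [ih h']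
      | seqAsync ha _ _ => exact absurd hs (fun hs => not_sync_async ha hs)
  | seqAsync ha hL hR ihL ihR =>
      intro t₂ h2
      cases h2 with
      | seqSync _ hs' h' => exact absurd hs' (fun hs => not_sync_async ha hs)
      | seqAsync _ hL' hR' => rw [ihL hL', ihR hR']

open Relation in
lemma none_terminal {o : Option Stmt} (h : ReflTransGen StepC none o) : o = none := by
  rcases h.cases_head with rfl | ⟨b, hb, _⟩
  · rfl
  · cases hb

open Relation

/-- lifting a reduction sequence through the Async context -/
lemma reach_async : ∀ {o₁ o₂ : Option Stmt}, ReflTransGen StepC o₁ o₂ → ∀ s, o₁ = some s →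
    ReflTransGen StepC (some (Stmt.Async s))
      (match o₂ with | some u => some (Stmt.Async u) | none => none) := by
  intro o₁ o₂ h
  induction h using ReflTransGen.head_induction_on with
  | refl => intro s hs; subst hs; exact ReflTransGen.refl
  | head hab h ih =>
      intro s hs; subst hs
      cases hab with
      | step hst => exact ReflTransGen.head (StepC.step (Step.async hst)) (ih _ rfl)
      | done hd =>
          have := none_terminal h; subst this
          exact ReflTransGen.single (StepC.done (StepDone.async hd))

/-- lifting a reduction sequence through the Finish context -/
lemma reach_finish : ∀ {o₁ o₂ : Option Stmt}, ReflTransGen StepC o₁ o₂ → ∀ s, o₁ = some s →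
    ReflTransGen StepC (some (Stmt.Finish s))
      (match o₂ with | some u => some (Stmt.Finish u) | none => none) := by
  intro o₁ o₂ h
  induction h using ReflTransGen.head_induction_on with
  | refl => intro s hs; subst hs; exact ReflTransGen.refl
  | head hab h ih =>
      intro s hs; subst hs
      cases hab with
      | step hst => exact ReflTransGen.head (StepC.step (Step.finish hst)) (ih _ rfl)
      | done hd =>
          have := none_terminal h; subst this
          exact ReflTransGen.single (StepC.done (StepDone.finish hd))

/-- lifting a reduction sequence through the left of a Seq -/
lemma reach_seqL (t : Stmt) : ∀ {o₁ o₂ : Option Stmt}, ReflTransGen StepC o₁ o₂ →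
    ∀ s, o₁ = some s →
    ReflTransGen StepC (some (Stmt.Seq s t))
      (match o₂ with | some u => some (Stmt.Seq u t) | none => some t) := by
  intro o₁ o₂ h
  induction h using ReflTransGen.head_induction_on with
  | refl => intro s hs; subst hs; exact ReflTransGen.refl
  | head hab h ih =>
      intro s hs; subst hs
      cases hab with
      | step hst => exact ReflTransGen.head (StepC.step (Step.seqL t hst)) (ih _ rfl)
      | done hd =>
          have := none_terminal h; subst this
          exact ReflTransGen.single (StepC.step (Step.seqLDone t hd))

/-- lifting a reduction sequence through the right of a Seq with async left -/
lemma reach_seqR {s : Stmt} (ha : isAsync s) : ∀ {o₁ o₂ : Option Stmt},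
    ReflTransGen StepC o₁ o₂ → ∀ t, o₁ = some t →
    ReflTransGen StepC (some (Stmt.Seq s t))
      (match o₂ with | some u => some (Stmt.Seq s u) | none => some s) := by
  intro o₁ o₂ h
  induction h using ReflTransGen.head_induction_on with
  | refl => intro u hu; subst hu; exact ReflTransGen.refl
  | head hab h ih =>
      intro u hu; subst hu
      cases hab with
      | step hst => exact ReflTransGen.head (StepC.step (Step.seqR ha hst)) (ih _ rfl)
      | done hd =>
          have := none_terminal h; subst this
          exact ReflTransGen.single (StepC.step (Step.seqRDone ha hd))

/-- local confluence of the one-step reduction on statements -/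
lemma step_confl : ∀ (s : Stmt) {t u : Stmt}, Step s t → Step s u →
    ∃ d, ReflTransGen StepC (some t) d ∧ ReflTransGen StepC (some u) d := by
  intro s
  induction s with
  | Basic => intro t u h1 _; cases h1
  | Advance => intro t u h1 _; cases h1
  | Async s ih =>
      intro t u h1 h2
      cases h1 with | async h1' =>
      cases h2 with | async h2' =>
      obtain ⟨d, hd1, hd2⟩ := ih h1' h2'
      exact ⟨_, reach_async hd1 _ rfl, reach_async hd2 _ rfl⟩
  | Finish s ih =>
      intro t u h1 h2
      cases h1 with
      | finish h1' =>
          cases h2 with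
          | finish h2' =>
              obtain ⟨d, hd1, hd2⟩ := ih h1' h2'
              exact ⟨_, reach_finish hd1 _ rfl, reach_finish hd2 _ rfl⟩
          | clock hst hd => exact absurd h1' (fun h => stuck_no_step hst h)
      | clock hst hd =>
          cases h2 with
          | finish h2' => exact absurd h2' (fun h => stuck_no_step hst h)
          | clock hst' hd' =>
              rw [derives_det hd hd']
              exact ⟨_, ReflTransGen.refl, ReflTransGen.refl⟩
  | Seq s t ihs iht =>
      intro x y h1 h2
      cases h1 with
      | seqL _ h1' =>
          cases h2 with
          | seqL _ h2' =>
              obtain ⟨d, hd1, hd2⟩ := ihs h1' h2'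
              exact ⟨_, reach_seqL t hd1 _ rfl, reach_seqL t hd2 _ rfl⟩
          | seqLDone _ hd => exact absurd h1' (fun h => done_no_step hd h)
          | seqR ha h2' =>
              exact ⟨some (Stmt.Seq _ _),
                ReflTransGen.single (StepC.step (Step.seqR (isAsync_step ha h1') h2')),
                ReflTransGen.single (StepC.step (Step.seqL _ h1'))⟩
          | seqRDone ha hd =>
              exact ⟨some _,
                ReflTransGen.single (StepC.step (Step.seqRDone (isAsync_step ha h1') hd)),
                ReflTransGen.single (StepC.step h1')⟩
      | seqLDone _ hd =>
          cases h2 with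
          | seqL _ h2' => exact absurd h2' (fun h => done_no_step hd h)
          | seqLDone _ _ => exact ⟨_, ReflTransGen.refl, ReflTransGen.refl⟩
          | seqR ha h2' =>
              exact ⟨some _, ReflTransGen.single (StepC.step h2'),
                ReflTransGen.single (StepC.step (Step.seqLDone _ hd))⟩
          | seqRDone ha hd' =>
              exact ⟨none, ReflTransGen.single (StepC.done hd'),
                ReflTransGen.single (StepC.done hd)⟩
      | seqR ha h1' =>
          cases h2 with
          | seqL _ h2' =>
              exact ⟨some (Stmt.Seq _ _),
                ReflTransGen.single (StepC.step (Step.seqL _ h2')),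
                ReflTransGen.single (StepC.step (Step.seqR (isAsync_step ha h2') h1'))⟩
          | seqLDone _ hd =>
              exact ⟨some _, ReflTransGen.single (StepC.step (Step.seqLDone _ hd)),
                ReflTransGen.single (StepC.step h1')⟩
          | seqR _ h2' =>
              obtain ⟨d, hd1, hd2⟩ := iht h1' h2'
              exact ⟨_, reach_seqR ha hd1 _ rfl, reach_seqR ha hd2 _ rfl⟩
          | seqRDone _ hd => exact absurd h1' (fun h => done_no_step hd h)
      | seqRDone ha hd =>
          cases h2 with
          | seqL _ h2' =>
              exact ⟨some _, ReflTransGen.single (StepC.step h2'),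
                ReflTransGen.single (StepC.step (Step.seqRDone (isAsync_step ha h2') hd))⟩
          | seqLDone _ hd' =>
              exact ⟨none, ReflTransGen.single (StepC.done hd'),
                ReflTransGen.single (StepC.done hd)⟩
          | seqR _ h2' => exact absurd h2' (fun h => done_no_step hd h)
          | seqRDone _ _ => exact ⟨_, ReflTransGen.refl, ReflTransGen.refl⟩

/-- local confluence on configurations -/
lemma stepC_confl {a b c : Option Stmt} (h1 : StepC a b) (h2 : StepC a c) :
    ∃ d, ReflTransGen StepC b d ∧ ReflTransGen StepC c d := by
  cases h1 with
  | step h1' =>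
      cases h2 with
      | step h2' => exact step_confl _ h1' h2'
      | done hd => exact absurd h1' (fun h => done_no_step hd h)
  | done hd =>
      cases h2 with
      | step h2' => exact absurd h2' (fun h => done_no_step hd h)
      | done _ => exact ⟨none, ReflTransGen.refl, ReflTransGen.refl⟩

/-- Newman's lemma: global confluence from local confluence and termination -/
lemma confluence : ∀ a b c : Option Stmt, ReflTransGen StepC a b → ReflTransGen StepC a c →
    ∃ d, ReflTransGen StepC b d ∧ ReflTransGen StepC c d := by
  intro a
  induction a using WellFounded.induction wf_stepC with
  | _ a ih =>
      intro b c hb hc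
      rcases hb.cases_head with rfl | ⟨b₁, hab1, hb1⟩
      · exact ⟨c, hc, ReflTransGen.refl⟩
      rcases hc.cases_head with rfl | ⟨c₁, hac1, hc1⟩
      · exact ⟨b, ReflTransGen.refl, ReflTransGen.head hab1 hb1⟩
      obtain ⟨e, he1, he2⟩ := stepC_confl hab1 hac1
      obtain ⟨f, hf1, hf2⟩ := ih b₁ hab1 b e hb1 he1
      obtain ⟨g, hg1, hg2⟩ := ih c₁ hac1 c f hc1 (he2.trans hf2)
      exact ⟨g, hf1.trans hg2, hg1⟩

/-- The reduction relation is strongly normalizing, and together with local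
confluence every configuration has a unique normal form. -/
theorem strong_normalization_and_unique_normal_form :
    WellFounded (fun a b : Option Stmt => StepC b a) ∧
    ∀ c n₁ n₂ : Option Stmt,
      Relation.ReflTransGen StepC c n₁ → Relation.ReflTransGen StepC c n₂ →
      (¬ ∃ d, StepC n₁ d) → (¬ ∃ d, StepC n₂ d) → n₁ = n₂ := by
  refine ⟨wf_stepC, ?_⟩
  intro c n₁ n₂ h1 h2 hn1 hn2
  obtain ⟨d, hd1, hd2⟩ := confluence c n₁ n₂ h1 h2
  have e1 : n₁ = d := by
    rcases hd1.cases_head with rfl | ⟨b, hb, _⟩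
    · rfl
    · exact absurd ⟨b, hb⟩ hn1
  have e2 : n₂ = d := by
    rcases hd2.cases_head with rfl | ⟨b, hb, _⟩
    · rfl
    · exact absurd ⟨b, hb⟩ hn2
  rw [e1, e2]
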